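/- arXiv:0901.2602 — 3 statements merged into one kernel-verified Lean document; each statement's English description precedes it below -/
import Mathlib

section
/- Let p be a prime, G an abelian group, X a set on which G acts, and F : X → ℝ/ℤ a function such that the p-fold additive derivative vanishes: Δ_{h₁}⋯Δ_{h_p} F = 0 for all h₁,…,h_p ∈ G, where Δ_h F(x) = F(h·x) − F(x). Suppose moreover that g^p acts trivially for every g ∈ G. Then for every g ∈ G, Δ_g (p·F) = 0, i.e., p·F is invariant under the G-action. -/
private lemma endMulApply {A : Type*} [AddCommMonoid A] (f g : AddMonoid.End A) (a : A) :
    (f * g) a = f (g a) := rfl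


/-- The additive derivative `Δ_h F (x) = F(h • x) − F(x)` of an `ℝ/ℤ`-valued function
on a `G`-space. -/
noncomputable def aderiv {G X : Type*} [SMul G X] (h : G) (F : X → UnitAddCircle) : X → UnitAddCircle :=
  fun x => F (h • x) - F x

/-- **Discreteness of values, part (i), logarithmic form.**  Let `p` be a prime, `G` an
abelian group acting on a set `X` and `F : X → ℝ/ℤ` with all `p`-fold additive
derivatives vanishing.  If `g ^ p` acts trivially for every `g ∈ G`, then
`Δ_g (p • F) = 0` for every `g`, i.e. `p • F` is invariant under the `G`-action. -/
theorem smul_invariant_of_poly_lt_p {G X : Type*} [CommGroup G] [MulAction G X]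
    (p : ℕ) (hp : p.Prime) (F : X → UnitAddCircle)
    (hdeg : ∀ h : Fin p → G, ∀ x : X, ((List.ofFn h).foldr aderiv F) x = 0)
    (hord : ∀ (g : G) (x : X), (g ^ p) • x = x) :
    ∀ (g : G) (x : X), p • F (g • x) = p • F x := by
  intro g x
  let T : AddMonoid.End (X → UnitAddCircle) :=
    AddMonoidHom.mk' (fun H => fun y => H (g • y)) (fun a b => rfl)
  let D : AddMonoid.End (X → UnitAddCircle) := T - 1
  have hT : T = D + 1 := by simp [D]
  have hDapp : ∀ H : X → UnitAddCircle, D H = aderiv g H := by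
    intro H; rfl
  have hTpow : ∀ (n : ℕ) (H : X → UnitAddCircle) (y : X), (T ^ n) H y = H (g ^ n • y) := by
    intro n
    induction n with
    | zero => intro H y; simp
    | succ n ih =>
        intro H y
        rw [pow_succ', endMulApply]
        show (T ^ n) H (g • y) = _
        rw [ih, smul_smul, ← pow_succ]
  have hfold : ∀ k : ℕ, (D ^ k) F = List.foldr aderiv F (List.replicate k g) := by
    intro k
    induction k with
    | zero => simp
    | succ k ih =>
        rw [pow_succ', endMulApply, ih, List.replicate_succ, List.foldr_cons, hDapp]
  have hDp : (D ^ p) F = 0 := by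
    rw [hfold]
    funext y
    have := hdeg (fun _ => g) y
    simpa [List.ofFn_const] using this
  set v : ℕ → (X → UnitAddCircle) := fun k => (D ^ k) F with hv
  have hv0 : ∀ m, p ≤ m → v m = 0 := by
    intro m hm
    have h1 : (D ^ m) F = (D ^ (m - p)) ((D ^ p) F) := by
      rw [← endMulApply, ← pow_add, Nat.sub_add_cancel hm]
    simp only [hv, h1, hDp, map_zero]
  have hTpF : (T ^ p) F = F := by
    funext y; rw [hTpow, hord]
  have hcomm : Commute T D := (Commute.refl T).sub_right (Commute.one_right T)
  have hTpv : ∀ j, (T ^ p) (v j) = v j := by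
    intro j
    have h2 : T ^ p * D ^ j = D ^ j * T ^ p := (hcomm.pow_pow p j).eq
    simp only [hv]
    rw [← endMulApply, h2, endMulApply, hTpF]
  have hexp : T ^ p = ∑ m ∈ Finset.range (p + 1), p.choose m • D ^ m := by
    rw [hT, Commute.add_pow (Commute.one_right D)]
    refine Finset.sum_congr rfl fun m hm => ?_
    rw [one_pow, mul_one, nsmul_eq_mul, (Nat.cast_commute (p.choose m) (D ^ m)).eq]
  have hrel : ∀ j, ∑ m ∈ Finset.range (p + 1), p.choose m • v (m + j) = v j := by
    intro j
    have h1 := hTpv j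
    rw [hexp] at h1
    rw [← h1]
    erw [AddMonoidHom.finset_sum_apply]
    refine Finset.sum_congr rfl fun m hm => ?_
    simp only [hv]
    rw [pow_add, endMulApply]
    rfl
  have key : ∀ d k, 1 ≤ k → p ≤ k + d → p • v k = 0 := by
    intro d
    induction d with
    | zero =>
        intro k hk hkd
        rw [hv0 k (by omega)]
        simp
    | succ d ih =>
        intro k hk hkd
        by_cases hc : p ≤ k + d
        · exact ih k hk hc
        obtain ⟨j, rfl⟩ : ∃ j, k = j + 1 := ⟨k - 1, by omega⟩
        obtain ⟨q, hpq⟩ : ∃ q, p = q + 1 := ⟨p - 1, by omega⟩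
        have h1 := hrel j
        rw [Finset.sum_range_succ'] at h1
        simp only [Nat.choose_zero_right, one_smul, zero_add] at h1
        have h2 : ∑ i ∈ Finset.range p, p.choose (i + 1) • v (i + 1 + j) = 0 := by
          have := sub_eq_zero.mpr h1
          rw [add_sub_cancel_right] at this
          exact this
        rw [hpq, Finset.sum_range_succ'] at h2
        have h3 : ∑ i ∈ Finset.range q, (q + 1).choose (i + 1 + 1) • v (i + 1 + 1 + j) = 0 := by
          refine Finset.sum_eq_zero fun i hi => ?_
          have hi' : i < q := Finset.mem_range.mp hi
          rw [← hpq]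
          by_cases hip : i + 2 = p
          · have : p ≤ i + 1 + 1 + j := by omega
            rw [hv0 _ this, smul_zero]
          · have hdvd : p ∣ p.choose (i + 2) :=
              hp.dvd_choose_self (by omega) (by omega)
            obtain ⟨c, hc'⟩ := hdvd
            have hz : p • v (i + 1 + 1 + j) = 0 := ih _ (by omega) (by omega)
            show p.choose (i + 2) • v (i + 1 + 1 + j) = 0
            rw [hc', mul_comm, mul_smul, hz, smul_zero]
        rw [h3, zero_add] at h2
        have e1 : (q + 1).choose (0 + 1) = p := by simp [hpq]
        have e2 : 0 + 1 + j = j + 1 := by omega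
        rw [e1, e2] at h2
        exact h2
  have hfin : p • v 1 = 0 := key (p - 1) 1 le_rfl (by omega)
  have hv1 : v 1 = aderiv g F := by simp only [hv, pow_one]; exact hDapp F
  rw [hv1] at hfin
  have h4 : p • (F (g • x) - F x) = 0 := by simpa [aderiv] using congrFun hfin x
  rw [smul_sub] at h4
  exact sub_eq_zero.mp h4
end

section
/- Let G be a countable abelian group acting ergodically by measure-preserving transformations on a probability space X, let k ≥ 1, and let φ, ψ : X → S¹ be measurable phase polynomials of degree < k (all k-fold multiplicative derivatives equal 1 a.e.). If φ/ψ is not a.e. constant, then ‖φ − ψ‖_{L²(X)} ≥ √2 / 2^{k−2}. -/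
open MeasureTheory
open scoped ENNReal NNReal

/-- The multiplicative derivative `Δ_h φ (x) = φ(h • x) · conj (φ x)` of a complex
valued function on a `G`-space. -/
def mderC {G X : Type*} [SMul G X] (h : G) (φ : X → ℂ) : X → ℂ :=
  fun x => φ (h • x) * (starRingEnd ℂ) (φ x)


section
variable {X : Type*} [MeasurableSpace X] {μ : Measure X} [IsProbabilityMeasure μ]

lemma unit_mul_conj {z : ℂ} (hz : ‖z‖ = 1) : z * (starRingEnd ℂ) z = 1 := by
  rw [Complex.mul_conj]
  norm_cast
  rw [Complex.normSq_eq_norm_sq, hz]; norm_num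

-- case B computation
lemma elpnorm_lower_of_integral_zero {σ : X → ℂ} (hm : Measurable σ)
    (hu : ∀ x, ‖σ x‖ = 1) (hI : ∫ x, σ x ∂μ = 0) :
    ENNReal.ofReal (Real.sqrt 2) ≤ eLpNorm (fun x => σ x - 1) 2 μ := by
  have hfm : AEStronglyMeasurable (fun x => σ x - 1) μ :=
    (hm.sub measurable_const).aestronglyMeasurable
  have hpt : ∀ x, ‖σ x - 1‖ ^ 2 = 2 - 2 * (σ x).re := by
    intro x
    have h1 : (σ x).re ^ 2 + (σ x).im ^ 2 = 1 := by
      have := Complex.sq_norm (σ x)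
      rw [hu x] at this
      rw [Complex.normSq_apply] at this
      nlinarith
    rw [Complex.sq_norm, Complex.normSq_apply]
    simp only [Complex.sub_re, Complex.sub_im, Complex.one_re, Complex.one_im]
    nlinarith
  have hint : Integrable σ μ := by
    refine Integrable.mono' (integrable_const 1) hm.aestronglyMeasurable ?_
    exact Filter.Eventually.of_forall fun x => by simp [hu x]
  have hI2 : ∫ x, ‖σ x - 1‖ ^ 2 ∂μ = 2 := by
    have : ∫ x, ‖σ x - 1‖ ^ 2 ∂μ = ∫ x, (2 - 2 * (σ x).re) ∂μ := by
      exact integral_congr_ae (Filter.Eventually.of_forall fun x => hpt x)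
    have hre : ∫ x, (σ x).re ∂μ = (∫ x, σ x ∂μ).re := by
      have := integral_re (𝕜 := ℂ) hint
      simpa using this
    have hre_int : Integrable (fun x => (σ x).re) μ := by
      have := hint.re; simpa using this
    rw [this, integral_sub (integrable_const 2) (hre_int.const_mul 2),
      integral_const_mul, hre, hI]
    simp
  have hint2 : Integrable (fun x => ‖σ x - 1‖ ^ 2) μ := by
    refine Integrable.mono' (integrable_const 4) (hfm.norm.pow 2) ?_
    refine Filter.Eventually.of_forall fun x => ?_
    have : ‖σ x - 1‖ ≤ 2 := by
      calc ‖σ x - 1‖ ≤ ‖σ x‖ + ‖(1:ℂ)‖ := norm_sub_le _ _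
      _ = 2 := by rw [hu x]; norm_num
    have h0 : (0:ℝ) ≤ ‖σ x - 1‖ := norm_nonneg _
    simp only [Real.norm_eq_abs]
    rw [abs_of_nonneg (by positivity)]
    nlinarith
  have heq : ∫⁻ x, (‖σ x - 1‖₊ : ℝ≥0∞) ^ (2:ℝ) ∂μ
      = ENNReal.ofReal (∫ x, ‖σ x - 1‖ ^ 2 ∂μ) := by
    rw [ofReal_integral_eq_lintegral_ofReal hint2
      (Filter.Eventually.of_forall fun x => by positivity)]
    refine lintegral_congr fun x => ?_
    rw [← enorm_eq_nnnorm, ← ofReal_norm, ENNReal.ofReal_pow (norm_nonneg _),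
      ← ENNReal.rpow_natCast]
    norm_num
  have hlin : ENNReal.ofReal 2 ≤ ∫⁻ x, (‖σ x - 1‖₊ : ℝ≥0∞) ^ (2:ℝ) ∂μ := by
    rw [heq, hI2]
  rw [eLpNorm_eq_lintegral_rpow_enorm_toReal two_ne_zero (by norm_num)]
  have h2 : ((2:ℝ≥0∞).toReal) = (2:ℝ) := by simp
  rw [h2]
  calc ENNReal.ofReal (Real.sqrt 2) = (ENNReal.ofReal 2) ^ (1/2 : ℝ) := by
        rw [ENNReal.ofReal_rpow_of_pos (by norm_num), Real.sqrt_eq_rpow]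
  _ ≤ (∫⁻ x, (‖σ x - 1‖₊ : ℝ≥0∞) ^ (2:ℝ) ∂μ) ^ (1/2 : ℝ) := by
        exact ENNReal.rpow_le_rpow hlin (by norm_num)
end

section
variable {G X : Type*} [CommGroup G] [Countable G] [MeasurableSpace X]
  {μ : Measure X} [IsProbabilityMeasure μ] [MulAction G X]

set_option linter.unusedSectionVars false in
lemma zero_or_one
    (hmp : ∀ g : G, MeasurePreserving (fun x => g • x) μ μ)
    (herg : ∀ s : Set X, MeasurableSet s →
      (∀ g : G, (fun x => g • x) ⁻¹' s = s) → μ s = 0 ∨ μ s = 1)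
    {s : Set X} (hs : MeasurableSet s)
    (hinv : ∀ g : G, (fun x => g • x) ⁻¹' s =ᵐ[μ] s) : μ s = 0 ∨ μ s = 1 := by
  set t := ⋂ g : G, (fun x => g • x) ⁻¹' s with ht
  have htm : MeasurableSet t := MeasurableSet.iInter fun g => (hmp g).measurable hs
  have htinv : ∀ g : G, (fun x => g • x) ⁻¹' t = t := by
    intro g
    ext x
    simp only [ht, Set.mem_iInter, Set.mem_preimage]
    constructor
    · intro hx h
      have := hx (h * g⁻¹)
      simpa [mul_smul, smul_smul, mul_assoc] using this
    · intro hx h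
      have := hx (h * g)
      simpa [mul_smul] using this
  have hts : t ⊆ s := by
    intro x hx
    have := Set.mem_iInter.1 hx 1
    simpa using this
  have hst : μ (s \ t) = 0 := by
    have : s \ t ⊆ ⋃ g : G, (s \ (fun x => g • x) ⁻¹' s) := by
      intro x hx
      rcases hx with ⟨hxs, hxt⟩
      rw [ht, Set.mem_iInter] at hxt
      push_neg at hxt
      rcases hxt with ⟨g, hg⟩
      exact Set.mem_iUnion.2 ⟨g, hxs, hg⟩
    refine measure_mono_null this (measure_iUnion_null fun g => ?_)
    have := (hinv g).symm
    rw [Filter.eventuallyEq_set] at this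
    have h0 : μ (s \ (fun x => g • x) ⁻¹' s) = 0 := by
      have := (ae_eq_set.1 (hinv g)).2
      exact this
    exact h0
  have hμst : μ s = μ t := by
    have h1 : μ s ≤ μ t + μ (s \ t) := by
      calc μ s ≤ μ (t ∪ (s \ t)) := measure_mono (by intro x hx; by_cases h : x ∈ t <;> simp [h, hx])
      _ ≤ μ t + μ (s \ t) := measure_union_le _ _
    have h2 : μ t ≤ μ s := measure_mono hts
    have := h1
    rw [hst, add_zero] at this
    exact le_antisymm this h2
  rw [hμst]
  exact herg t htm htinv

lemma ae_const_of_inv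
    (hmp : ∀ g : G, MeasurePreserving (fun x => g • x) μ μ)
    (herg : ∀ s : Set X, MeasurableSet s →
      (∀ g : G, (fun x => g • x) ⁻¹' s = s) → μ s = 0 ∨ μ s = 1)
    {f : X → ℂ} (hf : Measurable f)
    (hinv : ∀ g : G, ∀ᵐ x ∂μ, f (g • x) = f x) : ∃ c : ℂ, ∀ᵐ x ∂μ, f x = c := by
  have h := Filter.exists_eventuallyEq_const_of_forall_separating (l := ae μ) (f := f)
    MeasurableSet (fun U hU => ?_)
  · rcases h with ⟨c, hc⟩
    exact ⟨c, hc⟩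
  · have hsm : MeasurableSet (f ⁻¹' U) := hf hU
    have hainv : ∀ g : G, (fun x => g • x) ⁻¹' (f ⁻¹' U) =ᵐ[μ] (f ⁻¹' U) := by
      intro g
      rw [Filter.eventuallyEq_set]
      filter_upwards [hinv g] with x hx
      simp [Set.mem_preimage, hx]
    rcases zero_or_one hmp herg hsm hainv with h0 | h1
    · right
      rw [ae_iff]
      simpa [Set.preimage] using h0
    · left
      rw [ae_iff]
      have : μ (f ⁻¹' U)ᶜ = 0 := by
        rw [measure_compl hsm (measure_ne_top μ _), h1, measure_univ, tsub_self]
      simpa [Set.preimage, Set.compl_setOf] using this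
end

section
set_option linter.unusedSectionVars false
variable {G X : Type*} [CommGroup G] [Countable G] [MeasurableSpace X]
  {μ : Measure X} [IsProbabilityMeasure μ] [MulAction G X]

lemma mder_eq_iff {σ : X → ℂ} {h : G} {x : X} (hu : ‖σ x‖ = 1) {c : ℂ} :
    mderC h σ x = c ↔ σ (h • x) = c * σ x := by
  have h1 : σ x * (starRingEnd ℂ) (σ x) = 1 := unit_mul_conj hu
  constructor
  · intro hc
    have := congrArg (· * σ x) hc
    simpa [mderC, mul_assoc, mul_comm ((starRingEnd ℂ) (σ x)) (σ x), h1] using this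
  · intro hc
    simp only [mderC, hc, mul_assoc, h1, mul_one]

lemma core_sep
    (hmp : ∀ g : G, MeasurePreserving (fun x => g • x) μ μ)
    (herg : ∀ s : Set X, MeasurableSet s →
      (∀ g : G, (fun x => g • x) ⁻¹' s = s) → μ s = 0 ∨ μ s = 1) :
    ∀ k : ℕ, 1 ≤ k → ∀ σ : X → ℂ, Measurable σ → (∀ x, ‖σ x‖ = 1) →
    (∀ L : List G, L.length = k → ∀ᵐ x ∂μ, (L.foldr mderC σ) x = 1) →
    (¬ ∃ c : ℂ, ∀ᵐ x ∂μ, σ x = c) →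
    ENNReal.ofReal (Real.sqrt 2 / (2:ℝ) ^ ((k:ℤ) - 2)) ≤
      eLpNorm (fun x => σ x - 1) 2 μ := by
  intro k hk
  induction k, hk using Nat.le_induction with
  | base =>
    intro σ hm hu hp hne
    exfalso
    have hinv : ∀ g : G, ∀ᵐ x ∂μ, σ (g • x) = σ x := by
      intro g
      filter_upwards [hp [g] rfl] with x hx
      have : mderC g σ x = 1 := by simpa using hx
      simpa using (mder_eq_iff (hu x)).1 this
    exact hne (ae_const_of_inv hmp herg hm hinv)
  | succ k hk IH =>
    intro σ hm hu hp hne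
    by_cases hC : ∃ h : G, ¬ ∃ c : ℂ, ∀ᵐ x ∂μ, mderC h σ x = c
    · -- case A : some derivative is non-constant
      obtain ⟨h, hh⟩ := hC
      set τ := mderC h σ with hτ
      have hτm : Measurable τ :=
        (hm.comp (hmp h).measurable).mul (Complex.continuous_conj.measurable.comp hm)
      have hτu : ∀ x, ‖τ x‖ = 1 := by
        intro x; simp [hτ, mderC, map_mul, hu]
      have hτp : ∀ L : List G, L.length = k → ∀ᵐ x ∂μ, (L.foldr mderC τ) x = 1 := by
        intro L hL
        have := hp (L ++ [h]) (by simp [hL])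
        simpa [List.foldr_append] using this
      have hIH := IH τ hτm hτu hτp hh
      have E1 : eLpNorm (fun x => τ x - 1) 2 μ
          = eLpNorm (fun x => σ (h • x) - σ x) 2 μ := by
        refine eLpNorm_congr_norm_ae (Filter.Eventually.of_forall fun x => ?_)
        have h1 : τ x - 1 = (σ (h • x) - σ x) * (starRingEnd ℂ) (σ x) := by
          rw [hτ]; simp only [mderC, sub_mul, unit_mul_conj (hu x)]
        rw [h1, norm_mul]
        simp [hu x]
      have E2 : eLpNorm (fun x => σ (h • x) - σ x) 2 μ
          ≤ eLpNorm (fun x => σ x - 1) 2 μ + eLpNorm (fun x => σ x - 1) 2 μ := by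
        have hm1 : AEStronglyMeasurable (fun x => σ (h • x) - 1) μ :=
          ((hm.comp (hmp h).measurable).sub measurable_const).aestronglyMeasurable
        have hm2 : AEStronglyMeasurable (fun x => 1 - σ x) μ :=
          (measurable_const.sub hm).aestronglyMeasurable
        have htri := eLpNorm_add_le hm1 hm2 (by norm_num : (1:ℝ≥0∞) ≤ 2)
        have hfun : (fun x => σ (h • x) - σ x)
            = (fun x => σ (h • x) - 1) + (fun x => 1 - σ x) := by
          funext x; simp only [Pi.add_apply]; ring
        rw [hfun]
        refine le_trans htri ?_
        have hc1 : eLpNorm (fun x => σ (h • x) - 1) 2 μ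
            = eLpNorm (fun x => σ x - 1) 2 μ := by
          exact eLpNorm_comp_measurePreserving (g := fun y => σ y - 1)
            (hm.sub measurable_const).aestronglyMeasurable (hmp h)
        have hc2 : eLpNorm (fun x => 1 - σ x) 2 μ
            = eLpNorm (fun x => σ x - 1) 2 μ := by
          have : (fun x => 1 - σ x) = -(fun x => σ x - 1) := by funext x; simp
          rw [this, eLpNorm_neg]
        rw [hc1, hc2]
      have hval : Real.sqrt 2 / (2:ℝ) ^ (((k+1:ℕ):ℤ) - 2)
          = (Real.sqrt 2 / (2:ℝ) ^ ((k:ℤ) - 2)) / 2 := by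
        have : (((k+1:ℕ):ℤ) - 2) = ((k:ℤ) - 2) + 1 := by push_cast; ring
        rw [this, zpow_add_one₀ (by norm_num : (2:ℝ) ≠ 0)]
        ring
      rw [hval, ENNReal.ofReal_div_of_pos (by norm_num)]
      have h2 : ENNReal.ofReal 2 = 2 := by norm_num
      rw [h2]
      refine ENNReal.div_le_of_le_mul ?_
      calc ENNReal.ofReal (Real.sqrt 2 / (2:ℝ) ^ ((k:ℤ) - 2))
          ≤ eLpNorm (fun x => τ x - 1) 2 μ := hIH
        _ = eLpNorm (fun x => σ (h • x) - σ x) 2 μ := E1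
        _ ≤ eLpNorm (fun x => σ x - 1) 2 μ + eLpNorm (fun x => σ x - 1) 2 μ := E2
        _ = eLpNorm (fun x => σ x - 1) 2 μ * 2 := by rw [mul_two]
    · -- case B : all derivatives a.e. constant
      push_neg at hC
      by_cases h1 : ∀ h : G, ∀ᵐ x ∂μ, mderC h σ x = 1
      · exfalso
        have hinv : ∀ g : G, ∀ᵐ x ∂μ, σ (g • x) = σ x := by
          intro g
          filter_upwards [h1 g] with x hx
          simpa using (mder_eq_iff (hu x)).1 hx
        exact hne (ae_const_of_inv hmp herg hm hinv)
      · push_neg at h1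
        obtain ⟨h, hh1⟩ := h1
        obtain ⟨c, hc⟩ := hC h
        have hcne : c ≠ 1 := by
          rintro rfl; exact hh1 (hc.mono fun x hx => not_not_intro hx)
        have hce : ∀ᵐ x ∂μ, σ (h • x) = c * σ x := by
          filter_upwards [hc] with x hx
          exact (mder_eq_iff (hu x)).1 hx
        have hint : Integrable σ μ := by
          refine Integrable.mono' (integrable_const 1) hm.aestronglyMeasurable ?_
          exact Filter.Eventually.of_forall fun x => by simp [hu x]
        have hI : ∫ x, σ x ∂μ = 0 := by
          have hmap : ∫ x, σ (h • x) ∂μ = ∫ x, σ x ∂μ := by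
            rw [← MeasureTheory.integral_map (hmp h).measurable.aemeasurable
              (hm.aestronglyMeasurable.mono_ac (hmp h).map_eq.absolutelyContinuous),
              (hmp h).map_eq]
          have hmul : ∫ x, σ (h • x) ∂μ = c * ∫ x, σ x ∂μ := by
            rw [integral_congr_ae hce, integral_const_mul]
          have : (1 - c) * ∫ x, σ x ∂μ = 0 := by
            rw [sub_mul, one_mul]
            rw [hmap] at hmul
            rw [← hmul]; ring
          rcases mul_eq_zero.1 this with h0 | h0
          · exact absurd (by linear_combination -h0 : c = 1) hcne
          · exact h0
        have hB := elpnorm_lower_of_integral_zero hm hu hI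
        refine le_trans ?_ hB
        refine ENNReal.ofReal_le_ofReal ?_
        rw [div_le_iff₀ (by positivity)]
        have h1le : (1:ℝ) ≤ (2:ℝ) ^ (((k+1:ℕ):ℤ) - 2) := by
          refine one_le_zpow₀ (by norm_num) ?_
          omega
        nlinarith [Real.sqrt_nonneg 2]
end

section
set_option linter.unusedSectionVars false
variable {G X : Type*} [CommGroup G] [Countable G] [MeasurableSpace X]
  {μ : Measure X} [IsProbabilityMeasure μ] [MulAction G X]

lemma foldr_mul_conj (L : List G) (φ ψ : X → ℂ) :
    L.foldr mderC (fun x => φ x * (starRingEnd ℂ) (ψ x))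
      = fun x => (L.foldr mderC φ) x * (starRingEnd ℂ) ((L.foldr mderC ψ) x) := by
  induction L with
  | nil => rfl
  | cons h t ih =>
    simp only [List.foldr_cons, ih]
    funext x
    simp only [mderC, map_mul, Complex.conj_conj]
    ring

lemma ofFn_get_cast {k : ℕ} (L : List G) (hL : L.length = k) :
    List.ofFn (fun i : Fin k => L.get (Fin.cast hL.symm i)) = L := by
  subst hL
  simpa using List.ofFn_get L
end

theorem phasePoly_separation' {G X : Type*} [CommGroup G] [Countable G]
    [MeasurableSpace X] (μ : Measure X) [IsProbabilityMeasure μ] [MulAction G X]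
    (hmp : ∀ g : G, MeasurePreserving (fun x => g • x) μ μ)
    (herg : ∀ s : Set X, MeasurableSet s →
      (∀ g : G, (fun x => g • x) ⁻¹' s = s) → μ s = 0 ∨ μ s = 1)
    (k : ℕ) (hk : 1 ≤ k)
    (φ ψ : X → ℂ) (hφm : Measurable φ) (hψm : Measurable ψ)
    (hφu : ∀ x, ‖φ x‖ = 1) (hψu : ∀ x, ‖ψ x‖ = 1)
    (hφp : ∀ h : Fin k → G, ∀ᵐ x ∂μ, ((List.ofFn h).foldr mderC φ) x = 1)
    (hψp : ∀ h : Fin k → G, ∀ᵐ x ∂μ, ((List.ofFn h).foldr mderC ψ) x = 1)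
    (hne : ¬ ∃ c : ℂ, ∀ᵐ x ∂μ, φ x = c * ψ x) :
    ENNReal.ofReal (Real.sqrt 2 / (2 : ℝ) ^ ((k : ℤ) - 2)) ≤
      eLpNorm (fun x => φ x - ψ x) 2 μ := by
  set σ : X → ℂ := fun x => φ x * (starRingEnd ℂ) (ψ x) with hσ
  have hσm : Measurable σ := hφm.mul (Complex.continuous_conj.measurable.comp hψm)
  have hσu : ∀ x, ‖σ x‖ = 1 := by
    intro x; simp [hσ, map_mul, hφu, hψu]
  have hσp : ∀ L : List G, L.length = k → ∀ᵐ x ∂μ, (L.foldr mderC σ) x = 1 := by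
    intro L hL
    set h' : Fin k → G := fun i => L.get (Fin.cast hL.symm i)
    have hofn : List.ofFn h' = L := ofFn_get_cast L hL
    filter_upwards [hφp h', hψp h'] with x h1 h2
    rw [hσ, foldr_mul_conj]
    rw [hofn] at h1 h2
    simp [h1, h2]
  have hσne : ¬ ∃ c : ℂ, ∀ᵐ x ∂μ, σ x = c := by
    rintro ⟨c, hc⟩
    refine hne ⟨c, ?_⟩
    filter_upwards [hc] with x hx
    have h1 : ψ x * (starRingEnd ℂ) (ψ x) = 1 := unit_mul_conj (hψu x)
    have : σ x * ψ x = φ x := by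
      rw [hσ]
      simp only [mul_assoc, mul_comm ((starRingEnd ℂ) (ψ x)) (ψ x), h1, mul_one]
    rw [← this, hx]
  have hE : eLpNorm (fun x => φ x - ψ x) 2 μ = eLpNorm (fun x => σ x - 1) 2 μ := by
    refine eLpNorm_congr_norm_ae (Filter.Eventually.of_forall fun x => ?_)
    have h1 : ψ x * (starRingEnd ℂ) (ψ x) = 1 := unit_mul_conj (hψu x)
    have h2 : φ x - ψ x = (σ x - 1) * ψ x := by
      rw [hσ, sub_mul, one_mul, mul_assoc, mul_comm ((starRingEnd ℂ) (ψ x)) (ψ x),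
        h1, mul_one]
    rw [h2, norm_mul]
    simp [hψu x]
  rw [hE]
  exact core_sep hmp herg k hk σ hσm hσu hσp hσne

/-- **Separation lemma.**  Let `G` be a countable abelian group acting ergodically by
measure-preserving transformations on a probability space `X`, let `k ≥ 1`, and let
`φ, ψ : X → S¹` be measurable phase polynomials of degree `< k` (all `k`-fold
multiplicative derivatives equal `1` a.e.).  If `φ/ψ` is not a.e. constant, then
`‖φ − ψ‖_{L²(X)} ≥ √2 / 2^{k−2}`. -/
theorem phasePoly_separation {G X : Type*} [CommGroup G] [Countable G]
    [MeasurableSpace X] (μ : Measure X) [IsProbabilityMeasure μ] [MulAction G X]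
    (hmp : ∀ g : G, MeasurePreserving (fun x => g • x) μ μ)
    (herg : ∀ s : Set X, MeasurableSet s →
      (∀ g : G, (fun x => g • x) ⁻¹' s = s) → μ s = 0 ∨ μ s = 1)
    (k : ℕ) (hk : 1 ≤ k)
    (φ ψ : X → ℂ) (hφm : Measurable φ) (hψm : Measurable ψ)
    (hφu : ∀ x, ‖φ x‖ = 1) (hψu : ∀ x, ‖ψ x‖ = 1)
    (hφp : ∀ h : Fin k → G, ∀ᵐ x ∂μ, ((List.ofFn h).foldr mderC φ) x = 1)
    (hψp : ∀ h : Fin k → G, ∀ᵐ x ∂μ, ((List.ofFn h).foldr mderC ψ) x = 1)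
    (hne : ¬ ∃ c : ℂ, ∀ᵐ x ∂μ, φ x = c * ψ x) :
    ENNReal.ofReal (Real.sqrt 2 / (2 : ℝ) ^ ((k : ℤ) - 2)) ≤
      eLpNorm (fun x => φ x - ψ x) 2 μ := by
  exact phasePoly_separation' μ hmp herg k hk φ ψ hφm hψm hφu hψu hφp hψp hne
end

section
/- Let G be a countable abelian group acting ergodically on a probability space X, and let k ≥ 1. Then the set of phase polynomials of degree < k on X (as elements of L²(X), identified up to a.e. equality), modulo multiplication by unimodular constants, is at most countable. -/
set_option linter.unusedSectionVars false

open MeasureTheory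

namespace PhasePolyAux

variable {G X : Type*} [CommGroup G] [Countable G]
    [MeasurableSpace X]
    {μ : Measure X} [IsProbabilityMeasure μ] [MulAction G X]

/-- Phase polynomial of degree `< k`, list form. -/
def IsPP (G : Type*) [SMul G X] (μ : Measure X) (k : ℕ) (φ : X → ℂ) : Prop :=
  Measurable φ ∧ (∀ x, ‖φ x‖ = 1) ∧
    ∀ l : List G, l.length = k → ∀ᵐ x ∂μ, (l.foldr mderC φ) x = 1

theorem isPP_iff (k : ℕ) (φ : X → ℂ) :
    IsPP G μ k φ ↔ (Measurable φ ∧ (∀ x, ‖φ x‖ = 1) ∧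
      ∀ h : Fin k → G, ∀ᵐ x ∂μ, ((List.ofFn h).foldr mderC φ) x = 1) := by
  constructor
  · rintro ⟨h1, h2, h3⟩
    exact ⟨h1, h2, fun h => h3 _ List.length_ofFn⟩
  · rintro ⟨h1, h2, h3⟩
    refine ⟨h1, h2, fun l hl => ?_⟩
    subst hl
    simpa [List.ofFn_getElem] using h3 (fun i => l[i])

theorem smulEquiv_aux (hmp : ∀ g : G, MeasurePreserving (fun x => g • x) μ μ) (a : G) :
    ∃ e : X ≃ᵐ X, (∀ x, e x = a • x) ∧ Measure.map (⇑e) μ = μ := by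
  refine ⟨{ toEquiv := MulAction.toPerm a
            measurable_toFun := (hmp a).measurable
            measurable_invFun := (hmp a⁻¹).measurable }, fun x => rfl, ?_⟩
  exact (hmp a).map_eq

theorem integral_smul_comp {E : Type*} [NormedAddCommGroup E] [NormedSpace ℝ E]
    (hmp : ∀ g : G, MeasurePreserving (fun x => g • x) μ μ) (a : G) (f : X → E) :
    ∫ x, f (a • x) ∂μ = ∫ x, f x ∂μ := by
  obtain ⟨e, he, hme⟩ := smulEquiv_aux hmp a
  calc ∫ x, f (a • x) ∂μ = ∫ x, f (e x) ∂μ := by simp [he]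
  _ = ∫ y, f y ∂(μ.map e) := (MeasureTheory.integral_map_equiv e f).symm
  _ = ∫ x, f x ∂μ := by rw [hme]

end PhasePolyAux
section S2
open Filter Set
namespace PhasePolyAux

variable {G X : Type*} [CommGroup G] [Countable G]
    [MeasurableSpace X]
    {μ : Measure X} [IsProbabilityMeasure μ] [MulAction G X]

theorem measurable_cconj {f : X → ℂ} (h : Measurable f) :
    Measurable (fun x => (starRingEnd ℂ) (f x)) :=
  Complex.continuous_conj.measurable.comp h

theorem foldr_mderC_mul (l : List G) (φ ψ : X → ℂ) :
    l.foldr mderC (fun x => φ x * ψ x)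
      = fun x => (l.foldr mderC φ) x * (l.foldr mderC ψ) x := by
  induction l with
  | nil => rfl
  | cons a l ih =>
      simp only [List.foldr_cons, ih]
      funext x
      simp only [mderC, map_mul]
      ring

theorem foldr_mderC_conj (l : List G) (φ : X → ℂ) :
    l.foldr mderC (fun x => (starRingEnd ℂ) (φ x))
      = fun x => (starRingEnd ℂ) ((l.foldr mderC φ) x) := by
  induction l with
  | nil => rfl
  | cons a l ih =>
      simp only [List.foldr_cons, ih]
      funext x
      simp only [mderC, map_mul]

theorem mderC_measurable (hmp : ∀ g : G, MeasurePreserving (fun x => g • x) μ μ)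
    (a : G) {φ : X → ℂ} (hφ : Measurable φ) : Measurable (mderC a φ) := by
  have h1 : Measurable fun x => φ (a • x) := hφ.comp (hmp a).measurable
  exact h1.mul (measurable_cconj hφ)

theorem mderC_abs (a : G) {φ : X → ℂ} (hφ : ∀ x, ‖φ x‖ = 1) (x : X) :
    ‖mderC a φ x‖ = 1 := by
  simp [mderC, map_mul, hφ]

theorem IsPP.mul_conj {k : ℕ} {φ ψ : X → ℂ} (hφ : IsPP G μ k φ) (hψ : IsPP G μ k ψ) :
    IsPP G μ k (fun x => φ x * (starRingEnd ℂ) (ψ x)) := by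
  refine ⟨hφ.1.mul (measurable_cconj hψ.1),
    fun x => by simp [map_mul, hφ.2.1, hψ.2.1], ?_⟩
  intro l hl
  filter_upwards [hφ.2.2 l hl, hψ.2.2 l hl] with x h1 h2
  rw [foldr_mderC_mul, foldr_mderC_conj]
  simp only [h1, h2]
  simp

theorem IsPP.mder (hmp : ∀ g : G, MeasurePreserving (fun x => g • x) μ μ)
    {k : ℕ} {φ : X → ℂ} (hφ : IsPP G μ (k + 1) φ) (a : G) : IsPP G μ k (mderC a φ) := by
  refine ⟨mderC_measurable hmp a hφ.1, mderC_abs a hφ.2.1, ?_⟩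
  intro l hl
  have h := hφ.2.2 (l ++ [a]) (by simp [hl])
  simpa [List.foldr_append] using h

theorem integrable_of_unimodular {φ : X → ℂ} (hm : Measurable φ)
    (hu : ∀ x, ‖φ x‖ = 1) : Integrable φ μ := by
  rw [← memLp_one_iff_integrable]
  exact MemLp.of_bound hm.aestronglyMeasurable 1
    (Filter.Eventually.of_forall fun x => by rw [hu x])

/-- An a.e. invariant measurable function is a.e. constant, under ergodicity. -/
theorem ae_const_of_invariant
    (hmp : ∀ g : G, MeasurePreserving (fun x => g • x) μ μ)
    (herg : ∀ s : Set X, MeasurableSet s →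
      (∀ g : G, (fun x => g • x) ⁻¹' s = s) → μ s = 0 ∨ μ s = 1)
    {g : X → ℂ} (hm : Measurable g)
    (hinv : ∀ a : G, ∀ᵐ x ∂μ, g (a • x) = g x) :
    ∃ c : ℂ, g =ᵐ[μ] fun _ => c := by
  apply exists_eventuallyEq_const_of_forall_separating (l := ae μ) MeasurableSet
  intro U hU
  set s : Set X := g ⁻¹' U with hs_def
  have hs : MeasurableSet s := hm hU
  -- each translate of s differs from s by a null set
  have h0 : ∀ a : G, μ (((fun x => a • x) ⁻¹' s) \ s) = 0 := by
    intro a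
    refine measure_mono_null (fun x hx => ?_) (ae_iff.mp (hinv a))
    rcases hx with ⟨hx1, hx2⟩
    simp only [Set.mem_preimage, hs_def] at hx1 hx2 ⊢
    intro hgx
    exact hx2 (hgx ▸ hx1)
  -- the union of translates is strictly invariant
  set u : Set X := ⋃ a : G, (fun x => a • x) ⁻¹' s with hu_def
  have hu_meas : MeasurableSet u :=
    MeasurableSet.iUnion fun a => (hmp a).measurable hs
  have hu_inv : ∀ b : G, (fun x => b • x) ⁻¹' u = u := by
    intro b
    ext x
    simp only [hu_def, Set.mem_preimage, Set.mem_iUnion, smul_smul]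
    constructor
    · rintro ⟨a, ha⟩; exact ⟨a * b, ha⟩
    · rintro ⟨a, ha⟩
      exact ⟨a * b⁻¹, by simpa [mul_assoc] using ha⟩
  have hsu : s ⊆ u := fun x hx => Set.mem_iUnion.mpr ⟨1, by simpa [one_smul] using hx⟩
  have hdiff : μ (u \ s) = 0 := by
    refine measure_mono_null (fun x hx => ?_) (measure_iUnion_null h0)
    rcases hx with ⟨hx1, hx2⟩
    rcases Set.mem_iUnion.mp hx1 with ⟨a, ha⟩
    exact Set.mem_iUnion.mpr ⟨a, ⟨ha, hx2⟩⟩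
  have hμ : μ u = μ s := by
    have h1 : μ u ≤ μ s := by
      calc μ u = μ (s ∪ (u \ s)) := by rw [Set.union_diff_cancel hsu]
      _ ≤ μ s + μ (u \ s) := measure_union_le _ _
      _ = μ s := by rw [hdiff, add_zero]
    exact le_antisymm h1 (measure_mono hsu)
  rcases herg u hu_meas hu_inv with h | h
  · right
    have : μ s = 0 := by rw [← hμ, h]
    rw [ae_iff]
    simpa [hs_def, Set.preimage, Set.compl_setOf] using this
  · left
    have hs1 : μ s = 1 := by rw [← hμ, h]
    have : μ sᶜ = 0 := by
      rw [prob_compl_eq_zero_iff hs]; exact hs1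
    rw [ae_iff]
    simpa [hs_def, Set.preimage, Set.compl_setOf] using this

end PhasePolyAux
end S2
section S3
open Filter Set
namespace PhasePolyAux

variable {G X : Type*} [CommGroup G] [Countable G]
    [MeasurableSpace X]
    {μ : Measure X} [IsProbabilityMeasure μ] [MulAction G X]

theorem normsq_sub_one (z : ℂ) (hz : ‖z‖ = 1) :
    ‖z - 1‖ ^ 2 = 2 - 2 * z.re := by
  have h2 : z.re ^ 2 + z.im ^ 2 = 1 := by
    have h := Complex.sq_norm z
    rw [hz] at h
    simpa [Complex.normSq_apply, sq] using h.symm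
  have h3 : ‖z - 1‖ ^ 2 = (z.re - 1) ^ 2 + z.im ^ 2 := by
    rw [Complex.sq_norm, Complex.normSq_apply]
    simp [Complex.sub_re, Complex.sub_im]
    ring
  rw [h3]; nlinarith [h2]

theorem integrable_normsq {η : X → ℂ} (hm : Measurable η)
    (hu : ∀ x, ‖η x‖ = 1) :
    Integrable (fun x => ‖η x - 1‖ ^ 2) μ := by
  rw [← memLp_one_iff_integrable]
  refine MemLp.of_bound ?_ 4 (Filter.Eventually.of_forall fun x => ?_)
  · exact ((hm.sub measurable_const).norm.pow_const 2).aestronglyMeasurable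
  · have hb : ‖η x - 1‖ ≤ 2 := by
      calc ‖η x - 1‖ ≤ ‖η x‖ + ‖(1 : ℂ)‖ := norm_sub_le _ _
      _ = 2 := by rw [hu]; norm_num
    rw [Real.norm_eq_abs, abs_of_nonneg (by positivity)]
    nlinarith [norm_nonneg (η x - 1)]

theorem integral_normsq_sub_one {η : X → ℂ} (hm : Measurable η)
    (hu : ∀ x, ‖η x‖ = 1) :
    ∫ x, ‖η x - 1‖ ^ 2 ∂μ = 2 - 2 * (∫ x, η x ∂μ).re := by
  have hint : Integrable η μ := integrable_of_unimodular hm hu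
  have h1 : ∀ x, ‖η x - 1‖ ^ 2 = 2 - 2 * (η x).re := fun x => normsq_sub_one _ (hu x)
  simp_rw [h1]
  have hre : Integrable (fun x => (η x).re) μ := hint.re
  rw [integral_sub (integrable_const 2) (hre.const_mul 2), integral_const,
    integral_const_mul]
  have h2 := integral_re (μ := μ) (f := η) hint
  simp only [RCLike.re_to_complex] at h2
  simp [measure_univ, h2]

theorem mderC_sub_one_norm {η : X → ℂ} (hu : ∀ x, ‖η x‖ = 1)
    (a : G) (x : X) : ‖mderC a η x - 1‖ = ‖η (a • x) - η x‖ := by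
  have h2 : η x * (starRingEnd ℂ) (η x) = 1 := by
    rw [Complex.mul_conj]
    norm_cast
    rw [Complex.normSq_eq_norm_sq, hu]; norm_num
  have h3 : mderC a η x - 1 = (η (a • x) - η x) * (starRingEnd ℂ) (η x) := by
    simp only [mderC, sub_mul, h2]
  rw [h3, norm_mul]
  have hcn : ‖(starRingEnd ℂ) (η x)‖ = 1 := by
    rw [Complex.norm_conj, hu x]
  rw [hcn, mul_one]

/-- Main induction: a phase polynomial close to 1 in `L²` is a.e. constant. -/
theorem const_of_close (hmp : ∀ g : G, MeasurePreserving (fun x => g • x) μ μ)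
    (herg : ∀ s : Set X, MeasurableSet s →
      (∀ g : G, (fun x => g • x) ⁻¹' s = s) → μ s = 0 ∨ μ s = 1) :
    ∀ k : ℕ, ∀ η : X → ℂ, IsPP G μ (k + 1) η →
      (∫ x, ‖η x - 1‖ ^ 2 ∂μ) < 2 / 4 ^ k → ∃ c, η =ᵐ[μ] fun _ => c := by
  intro k
  induction k with
  | zero =>
      intro η hη _
      apply ae_const_of_invariant hmp herg hη.1
      intro a
      filter_upwards [hη.2.2 [a] rfl] with x hx
      have h2 : (starRingEnd ℂ) (η x) * η x = 1 := by
        rw [mul_comm, Complex.mul_conj]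
        norm_cast
        rw [Complex.normSq_eq_norm_sq, hη.2.1 x]; norm_num
      have hx' : mderC a η x = 1 := hx
      calc η (a • x) = η (a • x) * ((starRingEnd ℂ) (η x) * η x) := by rw [h2, mul_one]
      _ = mderC a η x * η x := by rw [mderC]; ring
      _ = η x := by rw [hx', one_mul]
  | succ k ih =>
      intro η hη hclose
      have hm := hη.1
      have hu := hη.2.1
      have hint : Integrable η μ := integrable_of_unimodular hm hu
      -- each derivative is a.e. constant
      have step : ∀ a : G, ∃ c : ℂ, mderC a η =ᵐ[μ] fun _ => c := by
        intro a
        have hma : Measurable (fun x => η (a • x)) := hm.comp (hmp a).measurable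
        have hua : ∀ x, ‖η (a • x)‖ = 1 := fun x => hu _
        apply ih (mderC a η) (hη.mder hmp a)
        have hbd : ∀ x, ‖mderC a η x - 1‖ ^ 2
            ≤ 2 * ‖η (a • x) - 1‖ ^ 2 + 2 * ‖η x - 1‖ ^ 2 := by
          intro x
          rw [mderC_sub_one_norm hu a x]
          have h4 : ‖η (a • x) - η x‖ ≤ ‖η (a • x) - 1‖ + ‖η x - 1‖ := by
            calc ‖η (a • x) - η x‖ = ‖(η (a • x) - 1) - (η x - 1)‖ := by ring_nf
            _ ≤ ‖η (a • x) - 1‖ + ‖η x - 1‖ := norm_sub_le _ _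
          nlinarith [mul_self_le_mul_self (norm_nonneg (η (a • x) - η x)) h4,
            sq_nonneg (‖η (a • x) - 1‖ - ‖η x - 1‖), norm_nonneg (η (a • x) - 1),
            norm_nonneg (η x - 1)]
        have hI1 : Integrable (fun x => ‖mderC a η x - 1‖ ^ 2) μ :=
          integrable_normsq (mderC_measurable hmp a hm) (mderC_abs a hu)
        have hI2 : Integrable (fun x => ‖η (a • x) - 1‖ ^ 2) μ :=
          integrable_normsq hma hua
        have hI3 : Integrable (fun x => ‖η x - 1‖ ^ 2) μ := integrable_normsq hm hu
        calc ∫ x, ‖mderC a η x - 1‖ ^ 2 ∂μ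
            ≤ ∫ x, (2 * ‖η (a • x) - 1‖ ^ 2 + 2 * ‖η x - 1‖ ^ 2) ∂μ :=
              integral_mono hI1 ((hI2.const_mul 2).add (hI3.const_mul 2)) hbd
        _ = 2 * (∫ x, ‖η (a • x) - 1‖ ^ 2 ∂μ) + 2 * ∫ x, ‖η x - 1‖ ^ 2 ∂μ := by
              rw [integral_add (hI2.const_mul 2) (hI3.const_mul 2), integral_const_mul,
                integral_const_mul]
        _ = 4 * ∫ x, ‖η x - 1‖ ^ 2 ∂μ := by
              rw [integral_smul_comp hmp a (fun y => ‖η y - 1‖ ^ 2)]; ring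
        _ < 4 * (2 / 4 ^ (k + 1)) := by
              have : (0:ℝ) < 4 := by norm_num
              linarith [hclose]
        _ = 2 / 4 ^ k := by
              rw [pow_succ]; field_simp
      -- the integral of η is nonzero
      have hre : (∫ x, η x ∂μ).re > 0 := by
        have h1 := integral_normsq_sub_one (μ := μ) hm hu
        have h2 : (2:ℝ) / 4 ^ (k + 1) ≤ 2 := by
          apply div_le_self (by norm_num)
          exact one_le_pow₀ (by norm_num)
        nlinarith [hclose, h1]
      have hne : (∫ x, η x ∂μ) ≠ 0 := by
        intro h; rw [h] at hre; simp at hre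
      -- each derivative constant equals 1, so η is invariant
      apply ae_const_of_invariant hmp herg hm
      intro a
      obtain ⟨c, hc⟩ := step a
      have h5 : ∀ᵐ x ∂μ, η (a • x) = c * η x := by
        filter_upwards [hc] with x hx
        have h2 : (starRingEnd ℂ) (η x) * η x = 1 := by
          rw [mul_comm, Complex.mul_conj]
          norm_cast
          rw [Complex.normSq_eq_norm_sq, hu x]; norm_num
        calc η (a • x) = η (a • x) * ((starRingEnd ℂ) (η x) * η x) := by rw [h2, mul_one]
        _ = mderC a η x * η x := by rw [mderC]; ring
        _ = c * η x := by rw [hx]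
      have h6 : ∫ x, η (a • x) ∂μ = c * ∫ x, η x ∂μ := by
        rw [integral_congr_ae h5, integral_const_mul]
      have h7 : ∫ x, η (a • x) ∂μ = ∫ x, η x ∂μ := integral_smul_comp hmp a η
      have hc1 : c = 1 := by
        have := h7.symm.trans h6
        have h8 : (c - 1) * ∫ x, η x ∂μ = 0 := by linear_combination -this
        rcases mul_eq_zero.mp h8 with h | h
        · exact sub_eq_zero.mp h
        · exact absurd h hne
      filter_upwards [h5] with x hx
      rw [hx, hc1, one_mul]

end PhasePolyAux
end S3
section S4
open Filter Set
namespace PhasePolyAux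

variable {G X : Type*} [CommGroup G] [Countable G]
    [MeasurableSpace X]
    {μ : Measure X} [IsProbabilityMeasure μ] [MulAction G X]

theorem proportional_of_close (hmp : ∀ g : G, MeasurePreserving (fun x => g • x) μ μ)
    (herg : ∀ s : Set X, MeasurableSet s →
      (∀ g : G, (fun x => g • x) ⁻¹' s = s) → μ s = 0 ∨ μ s = 1)
    {k : ℕ} {φ ψ : X → ℂ}
    (hφ : IsPP G μ (k + 1) φ) (hψ : IsPP G μ (k + 1) ψ)
    (hclose : ∫ x, ‖φ x - ψ x‖ ^ 2 ∂μ < 2 / 4 ^ k) :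
    ∃ c : ℂ, ‖c‖ = 1 ∧ ∀ᵐ x ∂μ, φ x = c * ψ x := by
  set η : X → ℂ := fun x => φ x * (starRingEnd ℂ) (ψ x) with hη_def
  have hηPP : IsPP G μ (k + 1) η := hφ.mul_conj hψ
  have hψc : ∀ x, (starRingEnd ℂ) (ψ x) * ψ x = 1 := by
    intro x
    rw [mul_comm, Complex.mul_conj]
    norm_cast
    rw [Complex.normSq_eq_norm_sq, hψ.2.1 x]; norm_num
  have hnorm : ∀ x, ‖η x - 1‖ = ‖φ x - ψ x‖ := by
    intro x
    have h3 : η x - 1 = (φ x - ψ x) * (starRingEnd ℂ) (ψ x) := by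
      rw [hη_def, sub_mul]
      simp only [mul_comm (ψ x) _, hψc x]
    rw [h3, norm_mul, Complex.norm_conj,
      hψ.2.1 x, mul_one]
  obtain ⟨c, hc⟩ : ∃ c : ℂ, η =ᵐ[μ] fun _ => c := by
    apply const_of_close hmp herg k η hηPP
    calc ∫ x, ‖η x - 1‖ ^ 2 ∂μ = ∫ x, ‖φ x - ψ x‖ ^ 2 ∂μ := by simp_rw [hnorm]
    _ < 2 / 4 ^ k := hclose
  have habs : ‖c‖ = 1 := by
    obtain ⟨x, hx⟩ := hc.exists
    rw [← show η x = c from hx, hη_def]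
    simp [map_mul, hφ.2.1, hψ.2.1]
  refine ⟨c, habs, ?_⟩
  filter_upwards [hc] with x hx
  calc φ x = φ x * ((starRingEnd ℂ) (ψ x) * ψ x) := by rw [hψc x, mul_one]
  _ = η x * ψ x := by rw [hη_def]; ring
  _ = c * ψ x := by rw [hx]

theorem isPP_memℒp {k : ℕ} {φ : X → ℂ} (hφ : IsPP G μ k φ) : MemLp φ 2 μ :=
  MemLp.of_bound hφ.1.aestronglyMeasurable 1
    (Filter.Eventually.of_forall fun x => by rw [hφ.2.1 x])

theorem norm_sq_eq_integral (f g : Lp ℂ 2 μ) {φ ψ : X → ℂ}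
    (hf : (f : X → ℂ) =ᵐ[μ] φ) (hg : (g : X → ℂ) =ᵐ[μ] ψ) :
    ‖f - g‖ ^ 2 = ∫ x, ‖φ x - ψ x‖ ^ 2 ∂μ := by
  set h := f - g with hh_def
  have hh : (h : X → ℂ) =ᵐ[μ] fun x => φ x - ψ x := by
    filter_upwards [Lp.coeFn_sub f g, hf, hg] with x h1 h2 h3
    show (↑↑(f - g) : X → ℂ) x = φ x - ψ x
    rw [h1, Pi.sub_apply, h2, h3]
  have e1 : ‖h‖ ^ 2 = RCLike.re (inner (𝕜 := ℂ) h h) := (inner_self_eq_norm_sq h).symm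
  have e2 : (inner (𝕜 := ℂ) h h) = ∫ x, (starRingEnd ℂ) ((h : X → ℂ) x) * (h : X → ℂ) x ∂μ := by
    rw [L2.inner_def]
    congr 1
    funext x; simp only [RCLike.inner_apply, mul_comm]
  have e3 : RCLike.re (∫ x, (starRingEnd ℂ) ((h : X → ℂ) x) * (h : X → ℂ) x ∂μ)
      = ∫ x, ((starRingEnd ℂ) ((h : X → ℂ) x) * (h : X → ℂ) x).re ∂μ := by
    have := integral_re (μ := μ)
      (f := fun x => (starRingEnd ℂ) ((h : X → ℂ) x) * (h : X → ℂ) x) ?_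
    · simpa using this.symm
    · have := L2.integrable_inner (𝕜 := ℂ) h h
      exact this.congr (Filter.Eventually.of_forall fun x => by
        simp only [RCLike.inner_apply, mul_comm])
  have e4 : ∫ x, ((starRingEnd ℂ) ((h : X → ℂ) x) * (h : X → ℂ) x).re ∂μ
      = ∫ x, ‖φ x - ψ x‖ ^ 2 ∂μ := by
    apply integral_congr_ae
    filter_upwards [hh] with x hx
    rw [hx]
    rw [← Complex.normSq_eq_conj_mul_self]
    simp [Complex.sq_norm]
  rw [e1, e2, e3, e4]

end PhasePolyAux
end S4
section Main
open Filter Set PhasePolyAux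

/-- **At most countably many phase polynomials modulo constants.**
Let `G` be a countable abelian group acting ergodically on a (separable, i.e.
countably generated mod null sets) probability space `X`, and `k ≥ 1`.  Then the set
of phase polynomials of degree `< k` on `X`, identified up to a.e. equality and up to
multiplication by unimodular constants, is at most countable: there is a countable set
`D` of phase polynomials such that every phase polynomial of degree `< k` agrees a.e.
with a constant multiple of a member of `D`. -/
theorem phasePoly_countable_mod_constants {G X : Type*} [CommGroup G] [Countable G]
    [MeasurableSpace X] [MeasurableSpace.CountablyGenerated X]
    (μ : Measure X) [IsProbabilityMeasure μ] [MulAction G X]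
    (hmp : ∀ g : G, MeasurePreserving (fun x => g • x) μ μ)
    (herg : ∀ s : Set X, MeasurableSet s →
      (∀ g : G, (fun x => g • x) ⁻¹' s = s) → μ s = 0 ∨ μ s = 1)
    (k : ℕ) (hk : 1 ≤ k) :
    ∃ D : Set (X → ℂ), D.Countable ∧
      (∀ ψ ∈ D, Measurable ψ ∧ (∀ x, ‖ψ x‖ = 1) ∧
        (∀ h : Fin k → G, ∀ᵐ x ∂μ, ((List.ofFn h).foldr mderC ψ) x = 1)) ∧
      ∀ φ : X → ℂ, Measurable φ → (∀ x, ‖φ x‖ = 1) →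
        (∀ h : Fin k → G, ∀ᵐ x ∂μ, ((List.ofFn h).foldr mderC φ) x = 1) →
        ∃ ψ ∈ D, ∃ c : ℂ, ‖c‖ = 1 ∧ ∀ᵐ x ∂μ, φ x = c * ψ x := by
  classical
  obtain ⟨k', rfl⟩ : ∃ m, k = m + 1 := ⟨k - 1, by omega⟩
  haveI : Fact ((2 : ENNReal) ≠ ⊤) := ⟨by norm_num⟩
  set P : Set (Lp ℂ 2 μ) :=
    {f | ∃ φ : X → ℂ, IsPP G μ (k' + 1) φ ∧ (f : X → ℂ) =ᵐ[μ] φ} with hP_def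
  obtain ⟨s, hs_count, hs_dense⟩ := TopologicalSpace.exists_countable_dense ↥P
  set rep : Lp ℂ 2 μ → (X → ℂ) := fun f =>
    if h : ∃ φ : X → ℂ, IsPP G μ (k' + 1) φ ∧ (f : X → ℂ) =ᵐ[μ] φ then h.choose
    else fun _ => 1 with hrep_def
  have hrep : ∀ f : Lp ℂ 2 μ, f ∈ P →
      IsPP G μ (k' + 1) (rep f) ∧ (f : X → ℂ) =ᵐ[μ] rep f := by
    intro f hf
    have hfE : ∃ φ : X → ℂ, IsPP G μ (k' + 1) φ ∧ (f : X → ℂ) =ᵐ[μ] φ := hf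
    have : rep f = hfE.choose := dif_pos hfE
    rw [this]
    exact hfE.choose_spec
  refine ⟨rep '' (Subtype.val '' s), (hs_count.image _).image _, ?_, ?_⟩
  · rintro ψ ⟨f, ⟨y, hys, rfl⟩, rfl⟩
    exact (isPP_iff _ _).mp (hrep _ y.2).1
  · intro φ hm hub hder
    have hφPP : IsPP G μ (k' + 1) φ := (isPP_iff _ _).mpr ⟨hm, hub, hder⟩
    have hmem := isPP_memℒp hφPP
    set f : Lp ℂ 2 μ := hmem.toLp φ with hf_def
    have hfP : f ∈ P := ⟨φ, hφPP, MemLp.coeFn_toLp hmem⟩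
    have hε : (0 : ℝ) < Real.sqrt (2 / 4 ^ k') := Real.sqrt_pos.mpr (by positivity)
    obtain ⟨y, hy⟩ := Metric.dense_iff.mp hs_dense ⟨f, hfP⟩ _ hε
    obtain ⟨hy_ball, hy_s⟩ := hy
    set g : Lp ℂ 2 μ := (y : Lp ℂ 2 μ) with hg_def
    have hspec := hrep g y.2
    have hψPP : IsPP G μ (k' + 1) (rep g) := hspec.1
    have hdist : dist f g < Real.sqrt (2 / 4 ^ k') := by
      have := Metric.mem_ball.mp hy_ball
      rw [Subtype.dist_eq] at this
      rw [dist_comm]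
      exact this
    have hclose : ∫ x, ‖φ x - rep g x‖ ^ 2 ∂μ < 2 / 4 ^ k' := by
      have he : ‖f - g‖ ^ 2 = ∫ x, ‖φ x - rep g x‖ ^ 2 ∂μ :=
        norm_sq_eq_integral f g (MemLp.coeFn_toLp hmem) hspec.2
      rw [← he, ← dist_eq_norm]
      calc dist f g ^ 2 < Real.sqrt (2 / 4 ^ k') ^ 2 :=
        pow_lt_pow_left₀ hdist dist_nonneg (by norm_num)
      _ = 2 / 4 ^ k' := Real.sq_sqrt (by positivity)
    obtain ⟨c, hc1, hc2⟩ := proportional_of_close hmp herg hφPP hψPP hclose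
    exact ⟨rep g, ⟨g, ⟨y, hy_s, rfl⟩, rfl⟩, c, hc1, hc2⟩

end Main
end
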